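/- Let A be a free abelian group of rank 2 and f : A → S an abelian flag function (i.e. f is invariant under multiplication by nonzero integers, and A admits a strict filtration by subgroups indexed by a totally ordered set whose union is A, such that f is constant on each difference set). Then f takes at most two distinct values on A \ {0}. -/
import Mathlib


/-- A function on an abelian group is invariant if `f (n • a) = f a` for all nonzero
integers `n`. -/
def InvariantZ {A : Type*} [AddCommGroup A] {S : Type*} (f : A → S) : Prop :=
  ∀ n : ℤ, n ≠ 0 → ∀ a : A, f (n • a) = f a

/-- `f` admits a strict filtration of `A` by subgroups, indexed by a totally ordered set,
exhausting `A`, such that `f` is constant on each successive difference set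
`A_ι \ ⋃_{ι' > ι} A_{ι'}`. -/
def HasFlagFiltration {A : Type*} [AddCommGroup A] {S : Type*} (f : A → S) : Prop :=
  ∃ (I : Type) (lo : LinearOrder I) (F : I → AddSubgroup A),
    (∀ a : A, ∃ i : I, a ∈ F i) ∧
    (∀ i j : I, lo.lt i j → F j < F i) ∧
    (∀ (i : I) (x y : A), x ∈ F i → (∀ j : I, lo.lt i j → x ∉ F j) →
      y ∈ F i → (∀ j : I, lo.lt i j → y ∉ F j) → f x = f y)

/-- Abelian flag function on a finitely generated torsion-free abelian group. -/
def IsAF {A : Type*} [AddCommGroup A] {S : Type*} (f : A → S) : Prop :=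
  InvariantZ f ∧ HasFlagFiltration f

/-- Auxiliary determinant of two integer vectors. -/
def ddet (u v : ℤ × ℤ) : ℤ := u.1 * v.2 - u.2 * v.1

lemma ddet_skew (u v : ℤ × ℤ) : ddet v u = -ddet u v := by
  simp only [ddet]; ring

lemma ddet_smul_smul (m n : ℤ) (u v : ℤ × ℤ) :
    ddet (m • u) (n • v) = m * n * ddet u v := by
  simp only [ddet, Prod.smul_fst, Prod.smul_snd, smul_eq_mul]; ring

lemma ddet_cramer (x y z : ℤ × ℤ) :
    ddet x y • z = ddet z y • x + ddet x z • y := by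
  refine Prod.ext ?_ ?_ <;>
    simp only [ddet, Prod.smul_fst, Prod.smul_snd, Prod.fst_add, Prod.snd_add,
      smul_eq_mul] <;> ring

lemma exists_mono_seq {I : Type} [LT I] {P : I → Prop}
    (h0 : ∃ i, P i) (hstep : ∀ i, P i → ∃ j, i < j ∧ P j) :
    ∃ k : ℕ → I, (∀ n, P (k n)) ∧ ∀ n, k n < k (n + 1) := by
  classical
  let g : {i // P i} → {i // P i} := fun p =>
    ⟨(hstep p.1 p.2).choose, (hstep p.1 p.2).choose_spec.2⟩
  have hg : ∀ p : {i // P i}, (p : I) < (g p).1 := fun p => (hstep p.1 p.2).choose_spec.1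
  obtain ⟨i0, hi0⟩ := h0
  refine ⟨fun n => ((g^[n]) ⟨i0, hi0⟩).1, fun n => ((g^[n]) ⟨i0, hi0⟩).2, fun n => ?_⟩
  show ((g^[n]) ⟨i0, hi0⟩ : I) < ((g^[n + 1]) ⟨i0, hi0⟩ : I)
  rw [Function.iterate_succ_apply']
  exact hg _

lemma bounded_chain (G : ℕ → AddSubgroup (ℤ × ℤ))
    (hlt : ∀ n, G (n + 1) < G n) (a c : ℤ × ℤ) (hD : ddet a c ≠ 0)
    (ha : ∀ n, a ∈ G n) (hc : ∀ n, c ∈ G n) : False := by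
  classical
  set D : ℤ := ((ddet a c).natAbs : ℤ) with hDdef
  have hDpos : 0 < D := by
    have h1 : (ddet a c).natAbs ≠ 0 := Int.natAbs_ne_zero.mpr hD
    have h2 : 0 < (ddet a c).natAbs := Nat.pos_of_ne_zero h1
    rw [hDdef]; exact_mod_cast h2
  have hsmul : ∀ (n : ℕ) (z : ℤ × ℤ), D • z ∈ G n := by
    intro n z
    have h1 : ddet a c • z ∈ G n := by
      rw [ddet_cramer a c z]
      exact add_mem (AddSubgroup.zsmul_mem _ (ha n) _) (AddSubgroup.zsmul_mem _ (hc n) _)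
    rcases Int.natAbs_eq (ddet a c) with h | h
    · rw [hDdef, ← h]; exact h1
    · have h2 : D = -ddet a c := by rw [hDdef]; linarith [h]
      rw [h2, neg_smul]; exact neg_mem h1
  let B : Finset (ℤ × ℤ) := Finset.Icc (0, 0) (D - 1, D - 1)
  let N : ℕ → ℕ := fun n => (B.filter fun v => v ∈ G n).card
  have hNdec : ∀ n, N (n + 1) < N n := by
    intro n
    have hlen : G (n + 1) ≤ G n := (hlt n).le
    obtain ⟨g, hg1, hg2⟩ := SetLike.exists_of_lt (hlt n)
    set r : ℤ × ℤ := (g.1 % D, g.2 % D) with hr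
    set q : ℤ × ℤ := (g.1 / D, g.2 / D) with hq
    have hgrq : g = r + D • q := by
      have e1 := Int.emod_add_mul_ediv g.1 D
      have e2 := Int.emod_add_mul_ediv g.2 D
      refine Prod.ext ?_ ?_ <;>
        simp only [hr, hq, Prod.fst_add, Prod.snd_add, Prod.smul_fst, Prod.smul_snd,
          smul_eq_mul] <;> linarith
    have hr11 : 0 ≤ g.1 % D := Int.emod_nonneg _ (ne_of_gt hDpos)
    have hr12 : g.1 % D < D := Int.emod_lt_of_pos _ hDpos
    have hr21 : 0 ≤ g.2 % D := Int.emod_nonneg _ (ne_of_gt hDpos)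
    have hr22 : g.2 % D < D := Int.emod_lt_of_pos _ hDpos
    have hrB : r ∈ B := by
      simp only [B, hr, Finset.mem_Icc, Prod.le_def]
      refine ⟨⟨hr11, hr21⟩, ⟨by omega, by omega⟩⟩
    have hrGn : r ∈ G n := by
      have hre : r = g - D • q := by rw [hgrq]; abel
      rw [hre]; exact sub_mem hg1 (hsmul n q)
    have hrGn1 : r ∉ G (n + 1) := by
      intro hrmem
      exact hg2 (by rw [hgrq]; exact add_mem hrmem (hsmul (n + 1) q))
    have hsubset : B.filter (fun v => v ∈ G (n + 1)) ⊆ B.filter (fun v => v ∈ G n) := by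
      intro v hv
      rw [Finset.mem_filter] at hv ⊢
      exact ⟨hv.1, hlen hv.2⟩
    have hss : B.filter (fun v => v ∈ G (n + 1)) ⊂ B.filter (fun v => v ∈ G n) := by
      refine (Finset.ssubset_iff_of_subset hsubset).mpr ⟨r, ?_, ?_⟩
      · rw [Finset.mem_filter]; exact ⟨hrB, hrGn⟩
      · rw [Finset.mem_filter]; intro hcon; exact hrGn1 hcon.2
    exact Finset.card_lt_card hss
  have hbound : ∀ n, N n + n ≤ N 0 := by
    intro n
    induction n with
    | zero => omega
    | succ n ih => have := hNdec n; omega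
  have := hbound (N 0 + 1)
  omega

/-- an abelian flag function on a free abelian group of rank 2 takes at most
two distinct values away from `0`. -/
theorem stmt_0 {S : Type*} (f : ℤ × ℤ → S) (hf : IsAF f) :
    ∃ s t : S, ∀ a : ℤ × ℤ, a ≠ 0 → f a = s ∨ f a = t := by
  obtain ⟨hinv, I, lo, F, hcov, hanti, hconst⟩ := hf
  letI : LinearOrder I := lo
  have hFlt : ∀ i j : I, i < j → F j < F i := hanti
  have hFle : ∀ i j : I, i ≤ j → F j ≤ F i := by
    intro i j h
    rcases h.eq_or_lt with h | h
    · exact le_of_eq (by rw [h])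
    · exact (hFlt _ _ h).le
  have hfeq : ∀ (i : I) (x y : ℤ × ℤ), x ∈ F i → (∀ j, i < j → x ∉ F j) →
      y ∈ F i → (∀ j, i < j → y ∉ F j) → f x = f y := hconst
  -- dependent nonzero vectors get equal values
  have hdep : ∀ x y : ℤ × ℤ, x ≠ 0 → y ≠ 0 → ddet x y = 0 → f x = f y := by
    intro x y hx hy hd
    have heq : x.1 * y.2 = x.2 * y.1 := by
      simp only [ddet] at hd; linarith
    obtain ⟨m, n, hm, hn, hmn⟩ :
        ∃ m n : ℤ, m ≠ 0 ∧ n ≠ 0 ∧ m • x = n • y := by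
      by_cases hy1 : y.1 = 0
      · have hy2 : y.2 ≠ 0 := by
          intro h2; exact hy (Prod.ext_iff.mpr ⟨by simpa using hy1, by simpa using h2⟩)
        have hx1 : x.1 = 0 := by
          have h0 : x.1 * y.2 = 0 := by rw [heq, hy1, mul_zero]
          rcases mul_eq_zero.mp h0 with h | h
          · exact h
          · exact absurd h hy2
        have hx2 : x.2 ≠ 0 := by
          intro h2; exact hx (Prod.ext_iff.mpr ⟨by simpa using hx1, by simpa using h2⟩)
        refine ⟨y.2, x.2, hy2, hx2, ?_⟩
        refine Prod.ext ?_ ?_ <;>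
          simp only [Prod.smul_fst, Prod.smul_snd, smul_eq_mul]
        · rw [hx1, hy1]; ring
        · ring
      · have hx1 : x.1 ≠ 0 := by
          intro h1
          have h0 : x.2 * y.1 = 0 := by rw [← heq, h1, zero_mul]
          rcases mul_eq_zero.mp h0 with h | h
          · exact hx (Prod.ext_iff.mpr ⟨by simpa using h1, by simpa using h⟩)
          · exact hy1 h
        refine ⟨y.1, x.1, hy1, hx1, ?_⟩
        refine Prod.ext ?_ ?_ <;>
          simp only [Prod.smul_fst, Prod.smul_snd, smul_eq_mul]
        · ring
        · linear_combination -heq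
    calc f x = f (m • x) := (hinv m hm x).symm
      _ = f (n • y) := by rw [hmn]
      _ = f y := hinv n hn y
  -- topped or tall
  have halt : ∀ w : ℤ × ℤ,
      (∃ i, w ∈ F i ∧ ∀ j, i < j → w ∉ F j) ∨
      ((∃ i, w ∈ F i) ∧ ∀ i, w ∈ F i → ∃ j, i < j ∧ w ∈ F j) := by
    intro w
    by_cases h : ∃ i, w ∈ F i ∧ ∀ j, i < j → w ∉ F j
    · exact Or.inl h
    · right
      refine ⟨hcov w, fun i hi => ?_⟩
      by_contra h2
      push_neg at h2
      exact h ⟨i, hi, h2⟩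
  have hmem3 : ∀ a b c : ℤ × ℤ, a + b + c = 0 → ∀ m : I, b ∈ F m → c ∈ F m → a ∈ F m := by
    intro a b c hsum m hb hc
    have hae : a = -(b + c) := by linear_combination hsum
    rw [hae]; exact neg_mem (add_mem hb hc)
  have noTwoAbove : ∀ a b c : ℤ × ℤ, a + b + c = 0 →
      ∀ i j k : I, i < j → i < k → (∀ j', i < j' → a ∉ F j') →
      b ∈ F j → c ∈ F k → False := by
    intro a b c hsum i j k hij hik hatop hb hc
    have hb' : b ∈ F (min j k) := hFle _ _ (min_le_left j k) hb
    have hc' : c ∈ F (min j k) := hFle _ _ (min_le_right j k) hc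
    exact hatop _ (lt_min hij hik) (hmem3 a b c hsum _ hb' hc')
  have tallPair : ∀ u v : ℤ × ℤ, ddet u v ≠ 0 → (∃ i, u ∈ F i) →
      (∀ i, u ∈ F i → ∃ j, i < j ∧ u ∈ F j) →
      (∀ k, u ∈ F k → v ∈ F k) → False := by
    intro u v hd hex hstep hsub
    obtain ⟨k, hk1, hk2⟩ := exists_mono_seq hex hstep
    exact bounded_chain (fun n => F (k n)) (fun n => hFlt _ _ (hk2 n)) u v hd
      (fun n => hk1 n) (fun n => hsub _ (hk1 n))
  have tallTall : ∀ u v : ℤ × ℤ, ddet u v ≠ 0 →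
      (∃ i, u ∈ F i) → (∀ i, u ∈ F i → ∃ j, i < j ∧ u ∈ F j) →
      (∃ i, v ∈ F i) → (∀ i, v ∈ F i → ∃ j, i < j ∧ v ∈ F j) → False := by
    intro u v hd hexu hu hexv hv
    by_cases hsub : ∀ k, u ∈ F k → v ∈ F k
    · exact tallPair u v hd hexu hu hsub
    · push_neg at hsub
      obtain ⟨k1, hu1, hv1⟩ := hsub
      have hsub' : ∀ k, v ∈ F k → u ∈ F k := by
        intro k hk
        rcases le_total k1 k with h | h
        · exact (hv1 (hFle _ _ h hk)).elim
        · exact hFle _ _ h hu1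
      exact tallPair v u (by rw [ddet_skew]; exact neg_ne_zero.mpr hd) hexv hv hsub'
  have tallv2 : ∀ a b c : ℤ × ℤ, a + b + c = 0 → ddet a c ≠ 0 →
      ∀ i j : I, i < j → a ∈ F i → (∀ j', i < j' → a ∉ F j') → b ∈ F j →
      (∃ k, c ∈ F k) → (∀ k, c ∈ F k → ∃ k', k < k' ∧ c ∈ F k') → False := by
    intro a b c hsum hd i j hij hai hatop hbj hexc hstepc
    have hsub : ∀ k, c ∈ F k → a ∈ F k := by
      intro k hk
      have hki : k ≤ i := by
        by_contra hgt
        push_neg at hgt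
        exact noTwoAbove a b c hsum i j k hij hgt hatop hbj hk
      exact hFle _ _ hki hai
    exact tallPair c a (by rw [ddet_skew]; exact neg_ne_zero.mpr hd) hexc hstepc hsub
  -- the key combinatorial step
  have key : ∀ a b c : ℤ × ℤ, a + b + c = 0 → ddet a b ≠ 0 → ddet a c ≠ 0 →
      ddet b c ≠ 0 → f a = f b ∨ f a = f c ∨ f b = f c := by
    intro a b c hsum dab dac dbc
    have dba : ddet b a ≠ 0 := by rw [ddet_skew]; exact neg_ne_zero.mpr dab
    have dca : ddet c a ≠ 0 := by rw [ddet_skew]; exact neg_ne_zero.mpr dac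
    have dcb : ddet c b ≠ 0 := by rw [ddet_skew]; exact neg_ne_zero.mpr dbc
    have hsum2 : b + a + c = 0 := by linear_combination hsum
    have hsum3 : c + a + b = 0 := by linear_combination hsum
    have hsum4 : a + c + b = 0 := by linear_combination hsum
    have hsum5 : b + c + a = 0 := by linear_combination hsum
    have hsum6 : c + b + a = 0 := by linear_combination hsum
    rcases halt a with ⟨i, hai, hatopa⟩ | ⟨hexa, hstepa⟩
    · rcases halt b with ⟨j, hbj, hatopb⟩ | ⟨hexb, hstepb⟩
      · rcases halt c with ⟨k, hck, hatopc⟩ | ⟨hexc, hstepc⟩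
        · rcases lt_trichotomy i j with h1 | h1 | h1
          · rcases lt_trichotomy i k with h2 | h2 | h2
            · exact (noTwoAbove a b c hsum i j k h1 h2 hatopa hbj hck).elim
            · subst h2
              exact Or.inr (Or.inl (hfeq i a c hai hatopa hck hatopc))
            · exact (noTwoAbove c a b hsum3 k i j h2 (h2.trans h1) hatopc hai hbj).elim
          · subst h1
            exact Or.inl (hfeq i a b hai hatopa hbj hatopb)
          · rcases lt_trichotomy j k with h2 | h2 | h2
            · exact (noTwoAbove b a c hsum2 j i k h1 h2 hatopb hai hck).elim
            · subst h2
              exact Or.inr (Or.inr (hfeq j b c hbj hatopb hck hatopc))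
            · exact (noTwoAbove c a b hsum3 k i j (h2.trans h1) h2 hatopc hai hbj).elim
        · rcases lt_trichotomy i j with h1 | h1 | h1
          · exact (tallv2 a b c hsum dac i j h1 hai hatopa hbj hexc hstepc).elim
          · subst h1
            exact Or.inl (hfeq i a b hai hatopa hbj hatopb)
          · exact (tallv2 b a c hsum2 dbc j i h1 hbj hatopb hai hexc hstepc).elim
      · rcases halt c with ⟨k, hck, hatopc⟩ | ⟨hexc, hstepc⟩
        · rcases lt_trichotomy i k with h1 | h1 | h1
          · exact (tallv2 a c b hsum4 dab i k h1 hai hatopa hck hexb hstepb).elim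
          · subst h1
            exact Or.inr (Or.inl (hfeq i a c hai hatopa hck hatopc))
          · exact (tallv2 c a b hsum3 dcb k i h1 hck hatopc hai hexb hstepb).elim
        · exact (tallTall b c dbc hexb hstepb hexc hstepc).elim
    · rcases halt b with ⟨j, hbj, hatopb⟩ | ⟨hexb, hstepb⟩
      · rcases halt c with ⟨k, hck, hatopc⟩ | ⟨hexc, hstepc⟩
        · rcases lt_trichotomy j k with h1 | h1 | h1
          · exact (tallv2 b c a hsum5 dba j k h1 hbj hatopb hck hexa hstepa).elim
          · subst h1
            exact Or.inr (Or.inr (hfeq j b c hbj hatopb hck hatopc))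
          · exact (tallv2 c b a hsum6 dca k j h1 hck hatopc hbj hexa hstepa).elim
        · exact (tallTall a c dac hexa hstepa hexc hstepc).elim
      · exact (tallTall a b dab hexa hstepa hexb hstepb).elim
  -- any three nonzero vectors: two share a value
  have main : ∀ x y z : ℤ × ℤ, x ≠ 0 → y ≠ 0 → z ≠ 0 →
      f x = f y ∨ f x = f z ∨ f y = f z := by
    intro x y z hx hy hz
    by_cases dxy : ddet x y = 0
    · exact Or.inl (hdep x y hx hy dxy)
    by_cases dxz : ddet x z = 0
    · exact Or.inr (Or.inl (hdep x z hx hz dxz))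
    by_cases dyz : ddet y z = 0
    · exact Or.inr (Or.inr (hdep y z hy hz dyz))
    have hzy : ddet z y ≠ 0 := by rw [ddet_skew]; exact neg_ne_zero.mpr dyz
    set a := ddet z y • x with ha
    set b := ddet x z • y with hb
    set c := (-ddet x y) • z with hc
    have hsum : a + b + c = 0 := by
      rw [ha, hb, hc, neg_smul, ← ddet_cramer x y z]
      simp
    have hfa : f a = f x := by rw [ha]; exact hinv _ hzy x
    have hfb : f b = f y := by rw [hb]; exact hinv _ dxz y
    have hfc : f c = f z := by rw [hc]; exact hinv _ (neg_ne_zero.mpr dxy) z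
    have dab : ddet a b ≠ 0 := by
      rw [ha, hb, ddet_smul_smul]
      exact mul_ne_zero (mul_ne_zero hzy dxz) dxy
    have dac : ddet a c ≠ 0 := by
      rw [ha, hc, ddet_smul_smul]
      exact mul_ne_zero (mul_ne_zero hzy (neg_ne_zero.mpr dxy)) dxz
    have dbc : ddet b c ≠ 0 := by
      rw [hb, hc, ddet_smul_smul]
      exact mul_ne_zero (mul_ne_zero dxz (neg_ne_zero.mpr dxy)) dyz
    rcases key a b c hsum dab dac dbc with h | h | h
    · exact Or.inl (by rw [← hfa, ← hfb, h])
    · exact Or.inr (Or.inl (by rw [← hfa, ← hfc, h]))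
    · exact Or.inr (Or.inr (by rw [← hfb, ← hfc, h]))
  by_contra hcon
  push_neg at hcon
  obtain ⟨y, hy0, hy1, -⟩ := hcon (f (1, 0)) (f (1, 0))
  obtain ⟨z, hz0, hz1, hz2⟩ := hcon (f (1, 0)) (f y)
  have h10 : ((1, 0) : ℤ × ℤ) ≠ 0 := by
    intro h
    simpa using congrArg Prod.fst h
  rcases main (1, 0) y z h10 hy0 hz0 with h | h | h
  · exact hy1 h.symm
  · exact hz1 h.symm
  · exact hz2 h.symm
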